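/- (Friedrich–Levine odometer criterion) Let G be an infinite, locally finite, connected graph with root o, ρ₀ an initial rotor configuration on G, and σ₀ = n·δ_o. Fix a finitely supported u_* : G → ℕ, let A_* = {x ∈ G : u_*(x) > 0}, and define (ρ_*, σ_*) = F^{u_*}(ρ₀, σ₀). Suppose (a) σ_*(x) ≤ 1 for all x, (b) A_* is finite, (c) σ_*(x) = 1 for all x ∈ A_*, and (d) ρ_* is acyclic on A_* (the directed graph with edges (x, ρ_*(x)) for x ∈ A_* has no directed cycle). Then u_* equals the odometer function of rotor-router aggregation of n particles started at o with initial rotor configuration ρ₀. -/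

import Mathlib

/-!
**Friedrich–Levine odometer criterion.**  Let `G` be an infinite, locally finite,
connected graph with root `o`, `ρ₀` an initial rotor configuration, and
`σ₀ = n·δ_o`.  If a finitely supported `u* : G → ℕ` with
`(ρ*, σ*) = F^{u*}(ρ₀, σ₀)` satisfies (a) `σ* ≤ 1`, (b) `A* = {u* > 0}` is
finite, (c) `σ* = 1` on `A*`, and (d) `ρ*` is acyclic on `A*`, then `u*` is the
odometer function of rotor-router aggregation of `n` particles started at `o`.
-/

namespace Stmt4

variable {V : Type*} [DecidableEq V]

/-- Advance the rotor at `x` currently pointing at `y`: if `y = x_i` in the cyclic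
ordering `c x` of the `deg x` neighbours of `x`, the rotor moves to
`x_{(i+1) mod deg x}`. -/
noncomputable def plus (G : SimpleGraph V) [G.LocallyFinite] (c : V → ℕ → V)
    (x y : V) : V :=
  if hi : ∃ i, i < G.degree x ∧ c x i = y then c x ((Nat.find hi + 1) % G.degree x)
  else y

/-- The number of particles sent from `x` to `y` when `x`, whose rotor initially
points at `ρx`, is toppled `n` times. -/
noncomputable def sentCount (G : SimpleGraph V) [G.LocallyFinite] (c : V → ℕ → V)
    (x : V) (ρx : V) (n : ℕ) (y : V) : ℕ :=
  ((Finset.range n).filter (fun k => (plus G c x)^[k + 1] ρx = y)).card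

/-- `F^u (ρ, σ)`: the result of toppling each vertex `x` exactly `u x` times
(well defined by the abelian property). -/
noncomputable def Fpow (G : SimpleGraph V) [G.LocallyFinite] (c : V → ℕ → V)
    (u : V → ℕ) (ρ : V → V) (σ : V → ℤ) : (V → V) × (V → ℤ) :=
  (fun x => (plus G c x)^[u x] (ρ x),
   fun y => σ y - u y + ∑ᶠ x, (sentCount G c x (ρ x) (u x) y : ℤ))

/-- A rotor configuration `ρ` is acyclic on the vertex set `A` if the directed
graph with edge set `{(x, ρ x) : x ∈ A}` contains no directed cycle. -/
def AcyclicOn (A : Set V) (ρ : V → V) : Prop :=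
  ¬ ∃ (x : V) (n : ℕ), 0 < n ∧ (∀ i < n, ρ^[i] x ∈ A) ∧ ρ^[n] x = x

/-- One step of a rotor-router walk, tracking (position, rotor configuration,
odometer): advance the rotor at the current position, move the particle there,
and record that one more particle was sent out of the current position. -/
noncomputable def wstep (G : SimpleGraph V) [G.LocallyFinite] (c : V → ℕ → V)
    (s : V × (V → V) × (V → ℕ)) : V × (V → V) × (V → ℕ) :=
  let ρ' := Function.update s.2.1 s.1 (plus G c s.1 (s.2.1 s.1))
  (ρ' s.1, ρ', Function.update s.2.2 s.1 (s.2.2 s.1 + 1))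

/-- The state of a rotor-router walk started at `o` after `t` steps. -/
noncomputable def pwalk (G : SimpleGraph V) [G.LocallyFinite] (c : V → ℕ → V)
    (o : V) (ρ : V → V) (u : V → ℕ) (t : ℕ) : V × (V → V) × (V → ℕ) :=
  (wstep G c)^[t] (o, ρ, u)

open Classical in
/-- Run one particle from `o` until it first leaves the cluster `R`; return its
final position together with the rotor configuration and odometer at that time. -/
noncomputable def settle (G : SimpleGraph V) [G.LocallyFinite] (c : V → ℕ → V)
    (o : V) (R : Set V) (ρ : V → V) (u : V → ℕ) : V × (V → V) × (V → ℕ) :=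
  if hex : ∃ t, (pwalk G c o ρ u t).1 ∉ R then pwalk G c o ρ u (Nat.find hex)
  else (o, ρ, u)

/-- Rotor-router aggregation with root `o`: `aggO k` is the triple
(cluster, rotor configuration, odometer) after `k + 1` particles; the first
particle just occupies `o` and each further particle performs a rotor-router walk
from `o` until it exits the current cluster, which it then joins. -/
noncomputable def aggO (G : SimpleGraph V) [G.LocallyFinite] (c : V → ℕ → V)
    (o : V) (ρ₀ : V → V) : ℕ → Set V × (V → V) × (V → ℕ)
  | 0 => ({o}, ρ₀, fun _ => 0)
  | k + 1 =>
      let s := aggO G c o ρ₀ k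
      let e := settle G c o s.1 s.2.1 s.2.2
      (insert e.1 s.1, e.2.1, e.2.2)

/-- The odometer function of rotor-router aggregation of `n` particles:
the number of particles sent out by each vertex during the creation of the
cluster of `n` particles. -/
noncomputable def odometer (G : SimpleGraph V) [G.LocallyFinite] (c : V → ℕ → V)
    (o : V) (ρ₀ : V → V) (n : ℕ) : V → ℕ :=
  (aggO G c o ρ₀ (n - 1)).2.2


section Lemmas

variable {G : SimpleGraph V} [G.LocallyFinite] {c : V → ℕ → V}

open Function Finset

lemma plus_enum (hinj : ∀ x : V, Set.InjOn (c x) (Set.Iio (G.degree x)))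
    {x : V} {i : ℕ} (hi : i < G.degree x) :
    plus G c x (c x i) = c x ((i + 1) % G.degree x) := by
  have hex : ∃ j, j < G.degree x ∧ c x j = c x i := ⟨i, hi, rfl⟩
  have hspec := Nat.find_spec hex
  have : Nat.find hex = i := hinj x hspec.1 hi hspec.2
  rw [plus, dif_pos hex, this]

lemma plus_adj (hc : ∀ x y : V, G.Adj x y ↔ ∃ i < G.degree x, c x i = y)
    (hinj : ∀ x : V, Set.InjOn (c x) (Set.Iio (G.degree x)))
    {x y : V} (h : G.Adj x y) : G.Adj x (plus G c x y) := by
  obtain ⟨i, hi, rfl⟩ := (hc x y).1 h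
  rw [plus_enum hinj hi]
  exact (hc x _).2 ⟨_, Nat.mod_lt _ ((Nat.zero_le i).trans_lt hi), rfl⟩

lemma plus_iter_adj (hc : ∀ x y : V, G.Adj x y ↔ ∃ i < G.degree x, c x i = y)
    (hinj : ∀ x : V, Set.InjOn (c x) (Set.Iio (G.degree x)))
    {x y : V} (h : G.Adj x y) (k : ℕ) : G.Adj x ((plus G c x)^[k] y) := by
  induction k with
  | zero => exact h
  | succ k ih => rw [Function.iterate_succ_apply']; exact plus_adj hc hinj ih

lemma plus_iter_enum (hinj : ∀ x : V, Set.InjOn (c x) (Set.Iio (G.degree x)))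
    {x : V} {i : ℕ} (hi : i < G.degree x) (k : ℕ) :
    (plus G c x)^[k] (c x i) = c x ((i + k) % G.degree x) := by
  have hd : 0 < G.degree x := lt_of_le_of_lt (Nat.zero_le _) hi
  induction k with
  | zero => simp [Nat.mod_eq_of_lt hi]
  | succ k ih =>
    rw [Function.iterate_succ_apply', ih, plus_enum hinj (Nat.mod_lt _ hd)]
    congr 1
    conv_lhs => rw [Nat.add_mod]
    conv_rhs => rw [show i + (k+1) = (i+k) + 1 by omega, Nat.add_mod]
    rw [Nat.mod_mod_of_dvd _ dvd_rfl]

lemma sentCount_zero (x ρx y) : sentCount G c x ρx 0 y = 0 := by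
  simp [sentCount]
  rfl

lemma sentCount_succ (x ρx m y) :
    sentCount G c x ρx (m + 1) y
      = sentCount G c x ρx m y + (if (plus G c x)^[m + 1] ρx = y then 1 else 0) := by
  unfold sentCount
  rw [Finset.range_add_one, Finset.filter_insert]
  split
  · rw [Finset.card_insert_of_notMem (fun hmem => Finset.notMem_range_self
      (Finset.mem_of_mem_filter m hmem))]
  · simp

lemma sentCount_add (x ρx a b y) :
    sentCount G c x ρx (a + b) y
      = sentCount G c x ρx a y + sentCount G c x ((plus G c x)^[a] ρx) b y := by
  induction b with
  | zero => simp [sentCount_zero]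
  | succ b ih =>
    rw [show a + (b+1) = (a+b) + 1 by omega, sentCount_succ, ih, sentCount_succ]
    have : (plus G c x)^[a + b + 1] ρx = (plus G c x)^[b + 1] ((plus G c x)^[a] ρx) := by
      rw [← Function.iterate_add_apply]; congr 1; omega
    rw [this, add_assoc]

lemma sentCount_support (x ρx m) :
    Function.support (fun y => (sentCount G c x ρx m y : ℤ))
      ⊆ ((Finset.range m).image (fun k => (plus G c x)^[k+1] ρx) : Finset V) := by
  intro y hy
  simp only [Function.mem_support, ne_eq, Nat.cast_eq_zero] at hy
  obtain ⟨k, hk⟩ := Finset.card_pos.1 (Nat.pos_of_ne_zero hy)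
  simp only [Finset.mem_filter, Finset.mem_range] at hk
  simp only [Finset.coe_image, Set.mem_image, Finset.mem_coe, Finset.mem_range]
  exact ⟨k, hk.1, hk.2⟩

lemma sentCount_total (x ρx m) :
    ∑ᶠ y, (sentCount G c x ρx m y : ℤ) = m := by
  classical
  rw [finsum_eq_finset_sum_of_support_subset _ (sentCount_support x ρx m)]
  rw [← Nat.cast_sum]
  norm_cast
  unfold sentCount
  exact (Finset.card_eq_sum_card_fiberwise (fun k hk => Finset.mem_image_of_mem _ hk)).symm.trans
    (by rw [Finset.card_range])

lemma sentCount_sum_subset {x ρx m} {S : Finset V}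
    (hS : ∀ k < m, (plus G c x)^[k+1] ρx ∈ S) :
    ∑ y ∈ S, (sentCount G c x ρx m y : ℤ) = m := by
  rw [← sentCount_total (G:=G) (c:=c) x ρx m]
  refine (finsum_eq_finset_sum_of_support_subset _ ?_).symm
  refine (sentCount_support x ρx m).trans ?_
  intro y hy
  simp only [Finset.coe_image, Set.mem_image, Finset.mem_coe, Finset.mem_range] at hy
  obtain ⟨k, hk, rfl⟩ := hy
  exact hS k hk

end Lemmas



section FpowLemmas

variable {G : SimpleGraph V} [G.LocallyFinite] {c : V → ℕ → V}

open Function Finset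

lemma Fpow_zero (ρ : V → V) (σ : V → ℤ) :
    Fpow G c (fun _ => 0) ρ σ = (ρ, σ) := by
  unfold Fpow
  refine Prod.ext rfl ?_
  funext y
  simp [sentCount_zero]

lemma Fpow_fst (u : V → ℕ) (ρ : V → V) (σ : V → ℤ) (x : V) :
    (Fpow G c u ρ σ).1 x = (plus G c x)^[u x] (ρ x) := rfl

lemma Fpow_snd (u : V → ℕ) (ρ : V → V) (σ : V → ℤ) (y : V) :
    (Fpow G c u ρ σ).2 y = σ y - u y + ∑ᶠ x, (sentCount G c x (ρ x) (u x) y : ℤ) := rfl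

lemma Fpow_add (u v : V → ℕ) (ρ : V → V) (σ : V → ℤ)
    (hu : (Function.support u).Finite) (hv : (Function.support v).Finite) :
    Fpow G c (fun x => u x + v x) ρ σ
      = Fpow G c v (Fpow G c u ρ σ).1 (Fpow G c u ρ σ).2 := by
  unfold Fpow
  refine Prod.ext ?_ ?_
  · funext x
    simp only
    rw [add_comm (u x) (v x), Function.iterate_add_apply]
  · funext y
    simp only
    have hsplit : ∀ x : V, (sentCount G c x (ρ x) (u x + v x) y : ℤ)
        = (sentCount G c x (ρ x) (u x) y : ℤ)
          + (sentCount G c x ((plus G c x)^[u x] (ρ x)) (v x) y : ℤ) := by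
      intro x; rw [sentCount_add]; push_cast; ring
    rw [finsum_congr hsplit, finsum_add_distrib]
    · push_cast; ring
    · refine Set.Finite.subset hu fun x hx => ?_
      simp only [Function.mem_support, ne_eq, Nat.cast_eq_zero] at hx ⊢
      intro h0; exact hx (by rw [h0, sentCount_zero])
    · refine Set.Finite.subset hv fun x hx => ?_
      simp only [Function.mem_support, ne_eq, Nat.cast_eq_zero] at hx ⊢
      intro h0; exact hx (by rw [h0, sentCount_zero])

lemma Fpow_single (x₀ : V) (ρ : V → V) (σ : V → ℤ) :
    Fpow G c (fun z => if z = x₀ then 1 else 0) ρ σ =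
      (Function.update ρ x₀ (plus G c x₀ (ρ x₀)),
       fun y => σ y - (if y = x₀ then 1 else 0)
         + (if plus G c x₀ (ρ x₀) = y then 1 else 0)) := by
  unfold Fpow
  refine Prod.ext ?_ ?_
  · funext z
    simp only
    rw [Function.update_apply]
    by_cases h : z = x₀ <;> simp [h]
  · funext y
    simp only
    have h1 : ∑ᶠ x, (sentCount G c x (ρ x) (if x = x₀ then 1 else 0) y : ℤ)
        = (sentCount G c x₀ (ρ x₀) 1 y : ℤ) := by
      rw [finsum_eq_single _ x₀ (fun x hx => by simp [hx, sentCount_zero])]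
      simp
    rw [h1]
    have h2 : sentCount G c x₀ (ρ x₀) 1 y = if plus G c x₀ (ρ x₀) = y then 1 else 0 := by
      unfold sentCount
      rw [show Finset.range 1 = {0} from rfl, Finset.filter_singleton]
      by_cases h : plus G c x₀ (ρ x₀) = y
      · rw [if_pos (by simpa using h)]; simp [h]
      · rw [if_neg (by simpa using h)]; simp [h]
    rw [h2]
    by_cases h : y = x₀ <;> by_cases h' : plus G c x₀ (ρ x₀) = y <;> simp [h, h']

lemma Fpow_sum (S : Finset V) (u : V → ℕ) (ρ : V → V) (σ : V → ℤ)
    (hu : ∀ x, u x ≠ 0 → x ∈ S)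
    (ht : ∀ x, u x ≠ 0 → ∀ k < u x, (plus G c x)^[k+1] (ρ x) ∈ S) :
    ∑ y ∈ S, (Fpow G c u ρ σ).2 y = ∑ y ∈ S, σ y := by
  classical
  have hrw : ∀ y : V, (Fpow G c u ρ σ).2 y
      = σ y - u y + ∑ x ∈ S, (sentCount G c x (ρ x) (u x) y : ℤ) := by
    intro y
    rw [Fpow_snd]
    congr 1
    refine finsum_eq_finset_sum_of_support_subset _ fun x hx => ?_
    simp only [Function.mem_support, ne_eq, Nat.cast_eq_zero] at hx
    refine hu x fun h0 => hx ?_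
    rw [h0, sentCount_zero]
  calc ∑ y ∈ S, (Fpow G c u ρ σ).2 y
      = ∑ y ∈ S, σ y - ∑ y ∈ S, (u y : ℤ)
        + ∑ y ∈ S, ∑ x ∈ S, (sentCount G c x (ρ x) (u x) y : ℤ) := by
        simp only [hrw]
        rw [Finset.sum_add_distrib, Finset.sum_sub_distrib]
    _ = ∑ y ∈ S, σ y := by
        rw [Finset.sum_comm]
        have : ∀ x ∈ S, ∑ y ∈ S, (sentCount G c x (ρ x) (u x) y : ℤ) = (u x : ℤ) := by
          intro x _
          by_cases h0 : u x = 0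
          · simp [h0, sentCount_zero]
          · exact sentCount_sum_subset (ht x h0)
        rw [Finset.sum_congr rfl this]
        ring

end FpowLemmas


section WalkLemmas

variable {G : SimpleGraph V} [G.LocallyFinite] {c : V → ℕ → V}

open Function Finset

lemma pwalk_zero (o : V) (ρs : V → V) (us : V → ℕ) :
    pwalk G c o ρs us 0 = (o, ρs, us) := rfl

lemma pwalk_succ (o : V) (ρs : V → V) (us : V → ℕ) (t : ℕ) :
    pwalk G c o ρs us (t+1) = wstep G c (pwalk G c o ρs us t) :=
  Function.iterate_succ_apply' _ _ _

lemma wstep_odo (s : V × (V → V) × (V → ℕ)) :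
    (wstep G c s).2.2 = fun z => s.2.2 z + (if z = s.1 then 1 else 0) := by
  funext z
  show Function.update s.2.2 s.1 (s.2.2 s.1 + 1) z = _
  rw [Function.update_apply]
  by_cases h : z = s.1 <;> simp [h]

lemma wstep_rotor (s : V × (V → V) × (V → ℕ)) :
    (wstep G c s).2.1 = Function.update s.2.1 s.1 (plus G c s.1 (s.2.1 s.1)) := rfl

lemma wstep_pos (s : V × (V → V) × (V → ℕ)) :
    (wstep G c s).1 = plus G c s.1 (s.2.1 s.1) := by
  show Function.update s.2.1 s.1 (plus G c s.1 (s.2.1 s.1)) s.1 = _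
  rw [Function.update_self]

/-- Master walk invariant. -/
lemma walk_fpow
    (hc : ∀ x y : V, G.Adj x y ↔ ∃ i < G.degree x, c x i = y)
    (hinj : ∀ x : V, Set.InjOn (c x) (Set.Iio (G.degree x)))
    (o : V) (ρ₀ : V → V) (σ₀ : V → ℤ) (base : V → ℤ) (ρs : V → V) (us : V → ℕ)
    (hst : Fpow G c us ρ₀ σ₀ = (ρs, fun y => base y + if y = o then 1 else 0))
    (hadj : ∀ x, G.Adj x (ρs x)) (hfin : (Function.support us).Finite) (t : ℕ) :
    Fpow G c (pwalk G c o ρs us t).2.2 ρ₀ σ₀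
        = ((pwalk G c o ρs us t).2.1,
           fun y => base y + if y = (pwalk G c o ρs us t).1 then 1 else 0)
      ∧ (∀ x, G.Adj x ((pwalk G c o ρs us t).2.1 x))
      ∧ (Function.support (pwalk G c o ρs us t).2.2).Finite
      ∧ us ≤ (pwalk G c o ρs us t).2.2 := by
  induction t with
  | zero => exact ⟨hst, hadj, hfin, le_refl _⟩
  | succ t ih =>
    obtain ⟨ihF, ihadj, ihfin, ihle⟩ := ih
    set st := pwalk G c o ρs us t with hstdef
    have hodo : (pwalk G c o ρs us (t+1)).2.2
        = fun z => st.2.2 z + (if z = st.1 then 1 else 0) := by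
      rw [pwalk_succ, wstep_odo]
    have hrot : (pwalk G c o ρs us (t+1)).2.1
        = Function.update st.2.1 st.1 (plus G c st.1 (st.2.1 st.1)) := by
      rw [pwalk_succ, wstep_rotor]
    have hpos : (pwalk G c o ρs us (t+1)).1 = plus G c st.1 (st.2.1 st.1) := by
      rw [pwalk_succ, wstep_pos]
    have hF : Fpow G c (pwalk G c o ρs us (t+1)).2.2 ρ₀ σ₀
        = Fpow G c (fun z => if z = st.1 then 1 else 0)
            (Fpow G c st.2.2 ρ₀ σ₀).1 (Fpow G c st.2.2 ρ₀ σ₀).2 := by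
      rw [hodo]
      exact Fpow_add st.2.2 _ ρ₀ σ₀ ihfin
        (Set.Finite.subset (Set.finite_singleton st.1)
          (fun z hz => by
            simp only [Function.mem_support] at hz
            by_cases h : z = st.1
            · exact Set.mem_singleton_iff.2 h
            · simp [h] at hz))
    rw [hF, ihF]
    simp only
    rw [Fpow_single]
    refine ⟨?_, ?_, ?_, ?_⟩
    · rw [hrot, hpos]
      refine Prod.ext rfl ?_
      simp only
      funext y
      have hflip : (if plus G c st.1 (st.2.1 st.1) = y then (1:ℤ) else 0)
          = if y = plus G c st.1 (st.2.1 st.1) then (1:ℤ) else 0 := by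
        by_cases h' : plus G c st.1 (st.2.1 st.1) = y
        · rw [if_pos h', if_pos h'.symm]
        · rw [if_neg h', if_neg (fun he => h' he.symm)]
      rw [hflip]
      split_ifs <;> ring
    · rw [hrot]
      intro x
      rw [Function.update_apply]
      by_cases h : x = st.1
      · rw [if_pos h, h]; exact plus_adj hc hinj (ihadj _)
      · rw [if_neg h]; exact ihadj x
    · rw [hodo]
      refine Set.Finite.subset (ihfin.union (Set.finite_singleton st.1)) fun z hz => ?_
      simp only [Function.mem_support] at hz
      by_cases h : z = st.1
      · exact Or.inr h
      · simp only [h, if_false, add_zero] at hz; exact Or.inl hz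
    · rw [hodo]
      intro z
      exact le_trans (ihle z) (Nat.le_add_right _ _)

/-- Rotor at `x` after `t` steps of the walk. -/
lemma pwalk_rotor_count (o : V) (ρs : V → V) (us : V → ℕ) :
    ∀ t x, (pwalk G c o ρs us t).2.1 x
      = (plus G c x)^[((Finset.range t).filter
          (fun i => (pwalk G c o ρs us i).1 = x)).card] (ρs x) := by
  intro t
  induction t with
  | zero => intro x; simp [pwalk_zero]
  | succ t ih =>
    intro x
    have hcard : ∀ x', ((Finset.range (t+1)).filter
        (fun i => (pwalk G c o ρs us i).1 = x')).card
        = ((Finset.range t).filter (fun i => (pwalk G c o ρs us i).1 = x')).card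
          + (if (pwalk G c o ρs us t).1 = x' then 1 else 0) := by
      intro x'
      rw [Finset.range_add_one, Finset.filter_insert]
      split
      · rw [Finset.card_insert_of_notMem (fun hmem => Finset.notMem_range_self
          (Finset.mem_of_mem_filter t hmem))]
      · simp
    rw [pwalk_succ, wstep_rotor, Function.update_apply]
    by_cases h : x = (pwalk G c o ρs us t).1
    · rw [if_pos h, h, hcard, if_pos rfl, ih]
      exact (Function.iterate_succ_apply' _ _ _).symm
    · rw [if_neg h, hcard, if_neg (fun he => h he.symm), add_zero, ih]

lemma acyclic_escape {A B : Set V} {ρ : V → V} (hac : AcyclicOn A ρ)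
    (hBA : B ⊆ A) (hfin : B.Finite) {b : V} (hb : b ∈ B) :
    ∃ x ∈ B, ρ x ∉ B := by
  by_contra h
  push_neg at h
  have hiter : ∀ m, ρ^[m] b ∈ B := by
    intro m
    induction m with
    | zero => exact hb
    | succ m ih => rw [Function.iterate_succ_apply']; exact h _ ih
  haveI := hfin.to_subtype
  obtain ⟨i, j, hne, heq⟩ := Finite.exists_ne_map_eq_of_infinite
    (fun m : ℕ => (⟨ρ^[m] b, hiter m⟩ : B))
  wlog hij : i < j generalizing i j
  · exact this j i hne.symm heq.symm (by omega)
  have heq' : ρ^[j] b = ρ^[i] b := congrArg Subtype.val heq.symm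
  refine hac ⟨ρ^[i] b, j - i, by omega, fun m _ => ?_, ?_⟩
  · rw [← Function.iterate_add_apply]
    exact hBA (hiter _)
  · rw [← Function.iterate_add_apply, show j - i + i = j by omega, heq']

end WalkLemmas


section Exit

variable {G : SimpleGraph V} [G.LocallyFinite] {c : V → ℕ → V}

open Function Finset

lemma exit_exists [Infinite V]
    (hc : ∀ x y : V, G.Adj x y ↔ ∃ i < G.degree x, c x i = y)
    (hinj : ∀ x : V, Set.InjOn (c x) (Set.Iio (G.degree x)))
    (hconn : G.Connected)
    (o : V) (ρs : V → V) (us : V → ℕ)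
    (hadj : ∀ x, G.Adj x (ρs x))
    (R : Set V) (hR : R.Finite) :
    ∃ t, (pwalk G c o ρs us t).1 ∉ R := by
  classical
  by_contra hcon
  push_neg at hcon
  haveI := hR.to_subtype
  obtain ⟨⟨x₀, hx₀R⟩, hfib⟩ := Finite.exists_infinite_fiber
    (fun t : ℕ => (⟨(pwalk G c o ρs us t).1, hcon t⟩ : R))
  have hx₀ : {t : ℕ | (pwalk G c o ρs us t).1 = x₀}.Infinite := by
    refine Set.Infinite.mono ?_ (Set.infinite_coe_iff.1 hfib)
    intro t ht
    simp only [Set.mem_preimage, Set.mem_singleton_iff, Subtype.ext_iff] at ht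
    exact ht
  set S : Set V := {x | {t : ℕ | (pwalk G c o ρs us t).1 = x}.Infinite} with hSdef
  -- S is closed under adjacency
  have hstep : ∀ x ∈ S, ∀ y, G.Adj x y → y ∈ S := by
    intro x hx y hxy
    obtain ⟨i₀, hi₀, hρs⟩ := (hc x (ρs x)).1 (hadj x)
    obtain ⟨i₁, hi₁, hy⟩ := (hc x y).1 hxy
    have hd : 0 < G.degree x := lt_of_le_of_lt (Nat.zero_le _) hi₀
    set p : ℕ → Prop := fun t => (pwalk G c o ρs us t).1 = x with hpdef
    have hpinf : (setOf p).Infinite := hx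
    have hposn : ∀ m, (pwalk G c o ρs us (Nat.nth p m + 1)).1
        = c x ((i₀ + (m + 1)) % G.degree x) := by
      intro m
      have hpt : (pwalk G c o ρs us (Nat.nth p m)).1 = x := Nat.nth_mem_of_infinite hpinf m
      have hcnt : ((Finset.range (Nat.nth p m)).filter
          (fun i => (pwalk G c o ρs us i).1 = x)).card = m := by
        have := Nat.count_nth_of_infinite hpinf m
        rwa [Nat.count_eq_card_filter_range] at this
      rw [pwalk_succ, wstep_pos, hpt, pwalk_rotor_count, hcnt]
      have hit : plus G c x ((plus G c x)^[m] (ρs x)) = (plus G c x)^[m+1] (ρs x) :=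
        (Function.iterate_succ_apply' _ _ _).symm
      rw [hit, show ρs x = c x i₀ from hρs.symm, plus_iter_enum hinj hi₀]
    -- y is visited infinitely often
    refine Set.infinite_of_not_bddAbove ?_
    rintro ⟨N, hN⟩
    set M := G.degree x * (N + i₀ + 2) with hMdef
    have hM : N + i₀ + 2 ≤ M := Nat.le_mul_of_pos_left _ hd
    set m := i₁ + M - i₀ - 1 with hmdef
    have hmod : (i₀ + (m + 1)) % G.degree x = i₁ := by
      have he : i₀ + (m + 1) = i₁ + M := by omega
      rw [he, hMdef, Nat.add_mul_mod_self_left, Nat.mod_eq_of_lt hi₁]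
    have hmem : Nat.nth p m + 1 ∈ {t : ℕ | (pwalk G c o ρs us t).1 = y} := by
      show (pwalk G c o ρs us (Nat.nth p m + 1)).1 = y
      rw [hposn m, hmod, hy]
    have hle := hN hmem
    have hnth : m ≤ Nat.nth p m := (Nat.nth_strictMono hpinf).le_apply
    omega
  have hallS : ∀ z : V, z ∈ S := by
    have haux : ∀ (a b : V), G.Walk a b → a ∈ S → b ∈ S := by
      intro a b w
      induction w with
      | nil => exact id
      | cons h w ih => intro ha; exact ih (hstep _ ha _ h)
    intro z
    obtain ⟨w⟩ := hconn.preconnected x₀ z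
    exact haux x₀ z w hx₀
  obtain ⟨z, hz⟩ := hR.infinite_compl.nonempty
  obtain ⟨t, ht⟩ := (hallS z).nonempty
  exact hz (ht ▸ hcon t)

end Exit


open Function Finset in
/-- **Friedrich–Levine odometer criterion.** -/
theorem friedrich_levine (G : SimpleGraph V) [G.LocallyFinite] [Infinite V]
    (hconn : G.Connected)
    (c : V → ℕ → V)
    (hc : ∀ x y : V, G.Adj x y ↔ ∃ i < G.degree x, c x i = y)
    (hinj : ∀ x : V, Set.InjOn (c x) (Set.Iio (G.degree x)))
    (o : V) (ρ₀ : V → V) (hρ₀ : ∀ x, G.Adj x (ρ₀ x))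
    (n : ℕ) (hn : 1 ≤ n)
    (ustar : V → ℕ)
    (hb : (Function.support ustar).Finite)
    (σ₀ : V → ℤ) (hσ₀ : σ₀ = fun y => if y = o then (n : ℤ) else 0)
    (ha : ∀ x, (Fpow G c ustar ρ₀ σ₀).2 x ≤ 1)
    (hcc : ∀ x ∈ Function.support ustar, (Fpow G c ustar ρ₀ σ₀).2 x = 1)
    (hd : AcyclicOn (Function.support ustar) (Fpow G c ustar ρ₀ σ₀).1) :
    ustar = odometer G c o ρ₀ n := by
  classical
  have main : ∀ k, k + 1 ≤ n →
      (Fpow G c (aggO G c o ρ₀ k).2.2 ρ₀ σ₀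
        = ((aggO G c o ρ₀ k).2.1,
           fun y => (if y ∈ (aggO G c o ρ₀ k).1 then (1:ℤ) else 0)
             + (if y = o then (n : ℤ) - (k + 1) else 0)))
      ∧ (aggO G c o ρ₀ k).1.Finite
      ∧ o ∈ (aggO G c o ρ₀ k).1
      ∧ (∀ x, G.Adj x ((aggO G c o ρ₀ k).2.1 x))
      ∧ (Function.support (aggO G c o ρ₀ k).2.2).Finite
      ∧ (aggO G c o ρ₀ k).2.2 ≤ ustar := by
    intro k
    induction k with
    | zero =>
      intro _
      have h0 : aggO G c o ρ₀ 0 = ({o}, ρ₀, fun _ => 0) := rfl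
      rw [h0]
      refine ⟨?_, Set.finite_singleton o, Set.mem_singleton o, hρ₀,
        (by simp : (Function.support (fun _ : V => 0)).Finite), fun z => Nat.zero_le _⟩
      rw [Fpow_zero]
      refine Prod.ext rfl ?_
      simp only
      funext y
      rw [hσ₀]
      simp only [Set.mem_singleton_iff]
      by_cases h : y = o
      · rw [if_pos h, if_pos h, if_pos h]
        push_cast
        ring
      · rw [if_neg h, if_neg h, if_neg h]
        ring
    | succ k ih =>
      intro hk2
      obtain ⟨ihF, ihRfin, ihoR, ihadj, ihufin, ihle⟩ := ih (by omega)
      set s := aggO G c o ρ₀ k with hsdef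
      set base : V → ℤ := fun y => (if y ∈ s.1 then (1:ℤ) else 0)
        + (if y = o then (n : ℤ) - (k + 2) else 0) with hbasedef
      have hst : Fpow G c s.2.2 ρ₀ σ₀
          = (s.2.1, fun y => base y + if y = o then 1 else 0) := by
        rw [ihF]
        refine Prod.ext rfl ?_
        simp only
        funext y
        rw [hbasedef]
        by_cases h : y = o <;> simp only [h, if_pos rfl, if_neg, if_false] <;>
          first
            | (push_cast; ring)
            | (rw [if_neg h, if_neg h, if_neg h]; ring)
      have hex : ∃ t, (pwalk G c o s.2.1 s.2.2 t).1 ∉ s.1 :=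
        exit_exists hc hinj hconn o s.2.1 s.2.2 ihadj s.1 ihRfin
      have hwalk := fun t => walk_fpow hc hinj o ρ₀ σ₀ base s.2.1 s.2.2 hst ihadj ihufin t
      have hsettle : settle G c o s.1 s.2.1 s.2.2
          = pwalk G c o s.2.1 s.2.2 (Nat.find hex) := by
        rw [settle, dif_pos hex]
      have haggO : aggO G c o ρ₀ (k+1)
          = (insert (settle G c o s.1 s.2.1 s.2.2).1 s.1,
             (settle G c o s.1 s.2.1 s.2.2).2.1,
             (settle G c o s.1 s.2.1 s.2.2).2.2) := rfl
      set e := pwalk G c o s.2.1 s.2.2 (Nat.find hex) with hedef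
      have hnotin : e.1 ∉ s.1 := Nat.find_spec hex
      obtain ⟨wF, wadj, wfin, wge⟩ := hwalk (Nat.find hex)
      -- the LAP leg
      have hleg : ∀ t, t ≤ Nat.find hex → (pwalk G c o s.2.1 s.2.2 t).2.2 ≤ ustar := by
        intro t
        induction t with
        | zero => intro _; exact ihle
        | succ t iht =>
          intro ht1
          have htT : t < Nat.find hex := by omega
          have hle_t := iht (by omega)
          have hpR : (pwalk G c o s.2.1 s.2.2 t).1 ∈ s.1 :=
            not_not.1 (Nat.find_min hex htT)
          obtain ⟨wFt, wadjt, wfint, _⟩ := hwalk t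
          set st := pwalk G c o s.2.1 s.2.2 t with hstdef
          have hwlt : st.2.2 st.1 < ustar st.1 := by
            by_contra hge
            push_neg at hge
            have heqp : ustar st.1 = st.2.2 st.1 := le_antisymm hge (hle_t st.1)
            set w : V → ℕ := fun z => ustar z - st.2.2 z with hwdef
            have hws : ustar = fun z => st.2.2 z + w z := by
              funext z
              have h2 : st.2.2 z ≤ ustar z := hle_t z
              simp only [hwdef]
              exact (Nat.add_sub_cancel' h2).symm
            have hwfin : (Function.support w).Finite := by
              refine Set.Finite.subset hb fun z hz => ?_
              simp only [Function.mem_support, hwdef] at hz ⊢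
              intro h0
              exact hz (by rw [h0]; exact Nat.zero_sub _)
            have hσp := ha st.1
            have hFw : Fpow G c ustar ρ₀ σ₀
                = Fpow G c w (Fpow G c st.2.2 ρ₀ σ₀).1 (Fpow G c st.2.2 ρ₀ σ₀).2 := by
              conv_lhs => rw [hws]
              exact Fpow_add st.2.2 w ρ₀ σ₀ wfint hwfin
            rw [hFw, Fpow_snd, wFt] at hσp
            simp only at hσp
            have hwp : w st.1 = 0 := by
              simp only [hwdef]
              rw [heqp]
              exact Nat.sub_self _
            have hinfl : (0:ℤ) ≤ ∑ᶠ x, (sentCount G c x ((Fpow G c st.2.2 ρ₀ σ₀).1 x)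
                (w x) st.1 : ℤ) := finsum_nonneg fun x => by positivity
            simp only [wFt] at hinfl
            have hbase : (1:ℤ) ≤ base st.1 := by
              rw [hbasedef]
              simp only [if_pos hpR]
              by_cases h : st.1 = o
              · rw [if_pos h]
                have : (k:ℤ) + 2 ≤ n := by exact_mod_cast hk2
                linarith
              · rw [if_neg h]; linarith
            simp only [if_true] at hσp
            rw [hwp] at hσp
            push_cast at hσp
            linarith
          intro z
          rw [pwalk_succ, wstep_odo]
          simp only [← hstdef]
          by_cases h : z = st.1
          · rw [if_pos h, h]
            exact hwlt
          · rw [if_neg h, add_zero]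
            exact hle_t z
      rw [haggO, hsettle]
      refine ⟨?_, ihRfin.insert _, Set.mem_insert_of_mem _ ihoR, wadj, wfin,
        hleg (Nat.find hex) le_rfl⟩
      rw [wF]
      refine Prod.ext rfl ?_
      simp only
      funext y
      show base y + (if y = e.1 then (1:ℤ) else 0) = _
      rw [hbasedef]
      simp only
      by_cases h1 : y = e.1
      · have h2 : y ∉ s.1 := h1 ▸ hnotin
        have h4 : y ≠ o := fun ho => h2 (ho ▸ ihoR)
        rw [if_pos h1, if_neg h2, if_neg h4, if_neg h4,
          if_pos (Set.mem_insert_iff.2 (Or.inl h1))]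
        ring
      · rw [if_neg h1]
        have h3 : (y ∈ insert e.1 s.1) ↔ (y ∈ s.1) := by
          simp [Set.mem_insert_iff, h1]
        have hoo : ∀ z : ℤ, (if y = o then (n:ℤ) - (↑k + 2) else 0)
            = (if y = o then (n:ℤ) - (↑(k+1) + 1) else 0) := by
          intro _
          by_cases h5 : y = o
          · rw [if_pos h5, if_pos h5]; push_cast; ring
          · rw [if_neg h5, if_neg h5]
        by_cases h6 : y ∈ s.1
        · rw [if_pos h6, if_pos (h3.2 h6), hoo 0, add_zero]
        · rw [if_neg h6, if_neg (fun hm => h6 (h3.1 hm)), hoo 0, add_zero]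
  -- apply at k = n - 1
  obtain ⟨hFR, hRfin, hoR, hadjR, hufinR, hleR⟩ := main (n-1) (by omega)
  set R := (aggO G c o ρ₀ (n-1)).1 with hRdef
  set ρR := (aggO G c o ρ₀ (n-1)).2.1 with hρRdef
  set uR := (aggO G c o ρ₀ (n-1)).2.2 with huRdef
  have hodef : odometer G c o ρ₀ n = uR := rfl
  have hshape : Fpow G c uR ρ₀ σ₀ = (ρR, fun y => if y ∈ R then (1:ℤ) else 0) := by
    rw [hFR]
    refine Prod.ext rfl ?_
    simp only
    funext y
    have : (n : ℤ) - ((n-1 : ℕ) + 1) = 0 := by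
      have : ((n-1:ℕ):ℤ) = (n:ℤ) - 1 := by push_cast [hn]; ring
      rw [this]; ring
    rw [this]
    simp
  set w : V → ℕ := fun z => ustar z - uR z with hwdef
  have hws : ustar = fun z => uR z + w z := by
    funext z
    have h2 : uR z ≤ ustar z := hleR z
    simp only [hwdef]
    exact (Nat.add_sub_cancel' h2).symm
  have hwfin : (Function.support w).Finite := by
    refine Set.Finite.subset hb fun z hz => ?_
    simp only [Function.mem_support, hwdef] at hz ⊢
    intro h0
    exact hz (by rw [h0]; exact Nat.zero_sub _)
  have hFw : Fpow G c ustar ρ₀ σ₀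
      = Fpow G c w ρR (fun y => if y ∈ R then (1:ℤ) else 0) := by
    conv_lhs => rw [hws]
    rw [Fpow_add uR w ρ₀ σ₀ hufinR hwfin, hshape]
  have hw0 : ∀ z, w z = 0 := by
    by_contra hcon
    push_neg at hcon
    obtain ⟨b, hbw⟩ := hcon
    have hBA : Function.support w ⊆ Function.support ustar := by
      intro z hz
      simp only [Function.mem_support, hwdef] at hz
      simp only [Function.mem_support]
      intro h0
      exact hz (by rw [h0]; exact Nat.zero_sub _)
    have hBfin : (Function.support w).Finite := hb.subset hBA
    obtain ⟨x, hxB, hxnot⟩ := acyclic_escape hd hBA hBfin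
      (Function.mem_support.2 hbw)
    set y := (Fpow G c ustar ρ₀ σ₀).1 x with hydef
    have hyx : y = (plus G c x)^[w x] (ρR x) := by
      rw [hydef, hFw, Fpow_fst]
    have hadjxy : G.Adj x y := by
      rw [hydef, Fpow_fst]
      exact plus_iter_adj hc hinj (hρ₀ x) _
    have hwy : w y = 0 := by
      by_contra hne
      exact hxnot (Function.mem_support.2 hne)
    -- a big finite set containing everything relevant
    set A : Finset V := hb.toFinset with hAdef
    set SS : Finset V := ((A ∪ hRfin.toFinset) ∪ {o}) ∪
      A.biUnion (fun z => G.neighborFinset z) with hSSdef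
    have hAS : ∀ z, ustar z ≠ 0 → z ∈ SS := by
      intro z hz
      refine Finset.mem_union_left _ (Finset.mem_union_left _ (Finset.mem_union_left _ ?_))
      simp [hAdef, Function.mem_support, hz]
    have hNS : ∀ z, ustar z ≠ 0 → ∀ z', G.Adj z z' → z' ∈ SS := by
      intro z hz z' hzz'
      refine Finset.mem_union_right _ ?_
      refine Finset.mem_biUnion.2 ⟨z, ?_, ?_⟩
      · simp [hAdef, Function.mem_support, hz]
      · exact (G.mem_neighborFinset z z').2 hzz'
    have huRS : ∀ z, uR z ≠ 0 → z ∈ SS := by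
      intro z hz
      refine hAS z fun h0 => hz (Nat.le_zero.1 (h0 ▸ hleR z)) 
    have hcons1 : ∑ z ∈ SS, (Fpow G c ustar ρ₀ σ₀).2 z = ∑ z ∈ SS, σ₀ z :=
      Fpow_sum SS ustar ρ₀ σ₀ hAS
        (fun z hz k _ => hNS z hz _ (plus_iter_adj hc hinj (hρ₀ z) (k+1)))
    have hcons2 : ∑ z ∈ SS, (Fpow G c uR ρ₀ σ₀).2 z = ∑ z ∈ SS, σ₀ z :=
      Fpow_sum SS uR ρ₀ σ₀ huRS
        (fun z hz k _ => hNS z (fun h0 => hz (Nat.le_zero.1 (h0 ▸ hleR z))) _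
          (plus_iter_adj hc hinj (hρ₀ z) (k+1)))
    have hsum : ∑ z ∈ SS, (if z ∈ R then (1:ℤ) else 0)
        = ∑ z ∈ SS, (Fpow G c ustar ρ₀ σ₀).2 z := by
      rw [hcons1, ← hcons2, hshape]
    have hpw : ∀ z ∈ SS, (if z ∈ R then (1:ℤ) else 0) ≤ (Fpow G c ustar ρ₀ σ₀).2 z := by
      intro z _
      by_cases hz : w z = 0
      · rw [hFw, Fpow_snd]
        have hinfl : (0:ℤ) ≤ ∑ᶠ x, (sentCount G c x (ρR x) (w x) z : ℤ) :=
          finsum_nonneg fun x => by positivity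
        rw [hz]
        push_cast
        linarith
      · have h1 : (Fpow G c ustar ρ₀ σ₀).2 z = 1 :=
          hcc z (hBA (Function.mem_support.2 hz))
        rw [h1]
        split <;> norm_num
    have heqOn := (Finset.sum_eq_sum_iff_of_le hpw).1 hsum
    have hyS : y ∈ SS := hNS x (hBA hxB) y hadjxy
    have hyeq := heqOn y hyS
    -- inflow into y is at least 1
    have hw1 : 1 ≤ w x := Nat.one_le_iff_ne_zero.2 (Function.mem_support.1 hxB)
    have hsent : 1 ≤ sentCount G c x (ρR x) (w x) y := by
      have hmem : w x - 1 ∈ (Finset.range (w x)).filter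
          (fun k => (plus G c x)^[k+1] (ρR x) = y) := by
        simp only [Finset.mem_filter, Finset.mem_range]
        exact ⟨by omega, by rw [show w x - 1 + 1 = w x by omega]; exact hyx.symm⟩
      exact Finset.card_pos.2 ⟨_, hmem⟩
    have hsfin : (Function.support (fun z => (sentCount G c z (ρR z) (w z) y : ℤ))).Finite := by
      refine Set.Finite.subset hwfin fun z hz => ?_
      simp only [Function.mem_support, ne_eq, Nat.cast_eq_zero] at hz ⊢
      intro h0
      exact hz (by rw [h0, sentCount_zero])
    have hinfl1 : (1:ℤ) ≤ ∑ᶠ z, (sentCount G c z (ρR z) (w z) y : ℤ) := by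
      refine le_trans ?_ (single_le_finsum x hsfin (fun j => by positivity))
      exact_mod_cast hsent
    rw [hFw, Fpow_snd] at hyeq
    rw [hwy] at hyeq
    push_cast at hyeq
    linarith
  rw [hodef]
  funext z
  have h1 : w z = 0 := hw0 z
  have h2 : uR z ≤ ustar z := hleR z
  simp only [hwdef] at h1
  exact Nat.le_antisymm (Nat.le_of_sub_eq_zero h1) h2

end Stmt4
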